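/- Let a(τ), b(τ) be differentiable with b(τ) > 0, a'(τ) = A(τ), b'(τ) = B(τ) > 0. Then the lognormal density f̃(w,τ) = (w√(2πb(τ)))^{-1} exp(-(log w + b(τ)/2 - a(τ))²/(2b(τ))) is a classical solution of the Fokker-Planck equation ∂_τ f̃ = ∂_w[-A(τ)w f̃ + (B(τ)/2) ∂_w(w² f̃)] on (0,∞) × (0,∞). -/

import Mathlib

open Real Filter

theorem stmt_17 (A B a b : ℝ → ℝ)
    (hab : ∀ τ, HasDerivAt a (A τ) τ ∧ HasDerivAt b (B τ) τ)
    (hbpos : ∀ τ, 0 < b τ) (hBpos : ∀ τ, 0 < B τ)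
    (f : ℝ → ℝ → ℝ)
    (hfdef : ∀ w τ, f w τ =
      (w * Real.sqrt (2 * π * b τ))⁻¹ *
        Real.exp (-(Real.log w + b τ / 2 - a τ) ^ 2 / (2 * b τ))) :
    ∀ w : ℝ, 0 < w → ∀ τ : ℝ, 0 < τ →
      HasDerivAt (fun t => f w t)
        (deriv (fun v => -(A τ) * v * f v τ
          + (B τ / 2) * deriv (fun u => u ^ 2 * f u τ) v) w) τ := by
  intro w hw τ hτ
  obtain ⟨ha, hb⟩ := hab τ
  have hbτ := hbpos τ
  have hb0 : b τ ≠ 0 := hbτ.ne'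
  have hπb : (0:ℝ) < 2 * π * b τ := by positivity
  have hc : 0 < Real.sqrt (2 * π * b τ) := Real.sqrt_pos.2 hπb
  have hc0 : Real.sqrt (2 * π * b τ) ≠ 0 := hc.ne'
  have hc2 : Real.sqrt (2 * π * b τ) ^ 2 = 2 * π * b τ := Real.sq_sqrt hπb.le
  set c := Real.sqrt (2 * π * b τ) with hcdef
  -- inner space derivative
  have hinner : ∀ v : ℝ, 0 < v → HasDerivAt (fun x => x ^ 2 * f x τ)
      (Real.exp (-(Real.log v + b τ / 2 - a τ) ^ 2 / (2 * b τ)) / c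
        * (1 - (Real.log v + b τ / 2 - a τ) / b τ)) v := by
    intro v hv
    have hlog : HasDerivAt (fun x : ℝ => Real.log x + b τ / 2 - a τ) v⁻¹ v :=
      ((Real.hasDerivAt_log hv.ne').add_const _).sub_const _
    have hE := ((hlog.pow 2).neg).div_const (2 * b τ)
    have hh := ((hasDerivAt_id v).mul hE.exp).div_const c
    have heq : (fun x : ℝ => x ^ 2 * f x τ)
        =ᶠ[nhds v] fun x => x * Real.exp (-(Real.log x + b τ / 2 - a τ) ^ 2 / (2 * b τ)) / c := by
      filter_upwards [Ioi_mem_nhds hv] with x hx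
      rw [hfdef, ← hcdef]
      have hx0 : x ≠ 0 := ne_of_gt hx
      field_simp
    have hfin := hh.congr_of_eventuallyEq heq
    refine hfin.congr_deriv ?_
    have hv0 : v ≠ 0 := ne_of_gt hv
    simp only [Pi.neg_apply, Pi.pow_apply, Pi.div_apply, Pi.inv_apply, Pi.mul_apply, id]
    field_simp
    ring
  -- outer space derivative
  have hlogw : HasDerivAt (fun x : ℝ => Real.log x + b τ / 2 - a τ) w⁻¹ w :=
    ((Real.hasDerivAt_log hw.ne').add_const _).sub_const _
  have hEw := ((hlogw.pow 2).neg).div_const (2 * b τ)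
  have hψ := ((((hlogw.div_const (b τ)).const_sub 1).const_mul (B τ / 2)).const_add
      (-(A τ))).mul (hEw.exp.div_const c)
  have hφψ : (fun v => -(A τ) * v * f v τ + (B τ / 2) * deriv (fun u => u ^ 2 * f u τ) v)
      =ᶠ[nhds w] (fun v => (-(A τ) + B τ / 2 * (1 - (Real.log v + b τ / 2 - a τ) / b τ)) *
        (Real.exp (-(Real.log v + b τ / 2 - a τ) ^ 2 / (2 * b τ)) / c)) := by
    filter_upwards [Ioi_mem_nhds hw] with v hv
    rw [(hinner v hv).deriv, hfdef, ← hcdef]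
    have hv0 : v ≠ 0 := ne_of_gt hv
    field_simp
  rw [hφψ.deriv_eq, show deriv (fun v => (-(A τ) + B τ / 2 * (1 - (Real.log v + b τ / 2 - a τ) / b τ)) *
          (Real.exp (-(Real.log v + b τ / 2 - a τ) ^ 2 / (2 * b τ)) / c)) w = _ from hψ.deriv]
  -- time derivative
  have hsq : HasDerivAt (fun t => Real.sqrt (2 * π * b t))
      (1 / (2 * c) * (2 * π * B τ)) τ := by
    have h1 : HasDerivAt (fun t => 2 * π * b t) (2 * π * B τ) τ := hb.const_mul (2 * π)
    simpa [Function.comp_def] using (Real.hasDerivAt_sqrt hπb.ne').comp τ h1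
  have hwc := (hsq.const_mul w).inv (by positivity)
  have hnum : HasDerivAt (fun t => Real.log w + b t / 2 - a t) (B τ / 2 - A τ) τ :=
    ((hb.div_const 2).const_add (Real.log w)).sub ha
  have hden : HasDerivAt (fun t => 2 * b t) (2 * B τ) τ := hb.const_mul 2
  have hN := ((hnum.pow 2).neg).div hden (by positivity)
  have hF := hwc.mul hN.exp
  simp only [hfdef]
  refine hF.congr_deriv ?_
  simp only [Pi.neg_apply, Pi.pow_apply, Pi.div_apply, Pi.inv_apply, Pi.mul_apply, id]
  rw [← hcdef]
  have hbc : b τ = c ^ 2 / (2 * π) := by rw [hc2]; field_simp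
  rw [hbc]
  have hπ0 : (π : ℝ) ≠ 0 := Real.pi_ne_zero
  field_simp
  ring_nf
  field_simp
  ring
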